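/- arXiv:1012.0199 — 8 statements merged into one kernel-verified Lean document; each statement's English description precedes it below -/
import Mathlib

section
/- Let μ, c₀, d, h be real numbers with σ > 0 and d + h ≥ 0, and define m := (1/2)·[(1 − 2(μ−c₀)/σ²) + √((1 − 2(μ−c₀)/σ²)² + 8(d+h)/σ²)]. Then m = 1 if and only if μ − h = d + c₀ (the balance condition between the effective growth rate of incumbent firms and the growth rate of investments in entrant firms). -/
open Real

theorem zipf_iff_balance (μ c₀ d h σ : ℝ) (hσ : 0 < σ) (hdh : 0 ≤ d + h)
    (m : ℝ)
    (hm : m = (1/2) * ((1 - 2*(μ - c₀)/σ^2) +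
      Real.sqrt ((1 - 2*(μ - c₀)/σ^2)^2 + 8*(d+h)/σ^2))) :
    m = 1 ↔ μ - h = d + c₀ := by
  have hσ2 : (0:ℝ) < σ^2 := by positivity
  obtain ⟨a, ha⟩ : ∃ x : ℝ, x = 1 - 2*(μ - c₀)/σ^2 := ⟨_, rfl⟩
  obtain ⟨b, hb⟩ : ∃ x : ℝ, x = 8*(d+h)/σ^2 := ⟨_, rfl⟩
  rw [← ha, ← hb] at hm
  have hb0 : 0 ≤ b := by rw [hb]; positivity
  obtain ⟨s, hsdef⟩ : ∃ x : ℝ, x = Real.sqrt (a^2 + b) := ⟨_, rfl⟩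
  rw [← hsdef] at hm
  have hs0 : 0 ≤ s := hsdef ▸ Real.sqrt_nonneg _
  have hssq : s^2 = a^2 + b := by
    rw [hsdef]; exact Real.sq_sqrt (by positivity)
  constructor
  · intro h1
    rw [hm] at h1
    have hs : s = 2 - a := by linarith
    have hkey : b = 4 - 4*a := by nlinarith [hssq, hs]
    rw [hb, ha] at hkey
    field_simp at hkey
    nlinarith [hkey, hσ2]
  · intro hbal
    have hkey : b = 4 - 4*a := by
      rw [hb, ha]
      field_simp
      nlinarith [hbal]
    have ha1 : a ≤ 1 := by nlinarith [hb0, hkey]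
    have hs : s = 2 - a := by
      rw [hsdef]
      have h2 : a^2 + b = (2-a)^2 := by rw [hkey]; ring
      rw [h2, Real.sqrt_sq (by linarith : (0:ℝ) ≤ 2 - a)]
    rw [hm, hs]; ring
end

section
/- Let μ, c₀, d, h be real numbers with σ > 0, d + h ≥ 0, and suppose the growth of the economy is driven by incumbent firms, i.e. μ − h ≥ d + c₀. Define m := (1/2)·[(1 − 2(μ−c₀)/σ²) + √((1 − 2(μ−c₀)/σ²)² + 8(d+h)/σ²)]. Then m ≤ 1, with equality if and only if μ − h = d + c₀ (the balanced growth path). -/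
open Real

theorem incumbent_driven_growth_tail_index_le_one (μ c₀ d h σ : ℝ)
    (hσ : 0 < σ) (hdh : 0 ≤ d + h) (hdrive : d + c₀ ≤ μ - h)
    (m : ℝ)
    (hm : m = (1/2) * ((1 - 2*(μ - c₀)/σ^2) +
      Real.sqrt ((1 - 2*(μ - c₀)/σ^2)^2 + 8*(d+h)/σ^2))) :
    m ≤ 1 ∧ (m = 1 ↔ μ - h = d + c₀) := by
  have hσ2 : (0:ℝ) < σ^2 := by positivity
  set k : ℝ := 2*(μ - c₀)/σ^2 with hkdef
  have hle : d + h ≤ μ - c₀ := by linarith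
  have he0 : 0 ≤ 8*(d+h)/σ^2 := by
    apply div_nonneg <;> nlinarith
  have hek : 8*(d+h)/σ^2 ≤ 4*k := by
    rw [hkdef]
    rw [div_le_iff₀ hσ2] at *
    field_simp
    nlinarith
  have hk0 : 0 ≤ k := by linarith
  have harg : (1 - k)^2 + 8*(d+h)/σ^2 ≤ (1+k)^2 := by nlinarith
  have hs_le : Real.sqrt ((1 - k)^2 + 8*(d+h)/σ^2) ≤ 1 + k := by
    calc Real.sqrt ((1 - k)^2 + 8*(d+h)/σ^2) ≤ Real.sqrt ((1+k)^2) :=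
          Real.sqrt_le_sqrt harg
      _ = 1 + k := Real.sqrt_sq (by linarith)
  constructor
  · rw [hm]; linarith
  constructor
  · intro h1
    -- m = 1 forces sqrt = 1 + k
    have hs_eq : Real.sqrt ((1 - k)^2 + 8*(d+h)/σ^2) = 1 + k := by
      rw [hm] at h1; linarith
    have hargnn : 0 ≤ (1 - k)^2 + 8*(d+h)/σ^2 := by positivity
    have hsq : (1 - k)^2 + 8*(d+h)/σ^2 = (1+k)^2 := by
      have := Real.sq_sqrt hargnn
      rw [hs_eq] at this
      nlinarith [this]
    have : 8*(d+h)/σ^2 = 4*k := by nlinarith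
    have : (d+h) * σ^2 = (μ - c₀) * σ^2 := by
      rw [hkdef] at this
      field_simp at this
      nlinarith
    have := mul_right_cancel₀ (ne_of_gt hσ2) this
    linarith
  · intro heq
    have h4 : 8*(d+h)/σ^2 = 4*k := by
      rw [hkdef]
      have : d + h = μ - c₀ := by linarith
      rw [this]; ring
    have : (1 - k)^2 + 8*(d+h)/σ^2 = (1+k)^2 := by rw [h4]; ring
    rw [hm, this, Real.sqrt_sq (by linarith)]
    ring
end

section
/- Fix real numbers c₀, d, h with d + h > 0 and σ > 0. Then the function μ ↦ m(μ) := (1/2)·[(1 − 2(μ−c₀)/σ²) + √((1 − 2(μ−c₀)/σ²)² + 8(d+h)/σ²)] is strictly decreasing on ℝ; that is, the tail index of the firm-size distribution strictly decreases as the expected growth rate μ of incumbent firms increases. -/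
open Real

lemma key_mono (k x y : ℝ) (hk : 0 < k) (hxy : x < y) :
    x + Real.sqrt (x^2 + k) < y + Real.sqrt (y^2 + k) := by
  have hx : -x < Real.sqrt (x^2 + k) := by
    have h1 : |x| < Real.sqrt (x^2 + k) := by
      rw [← Real.sqrt_sq_eq_abs]
      exact Real.sqrt_lt_sqrt (sq_nonneg x) (by linarith)
    linarith [neg_abs_le x]
  have hy : -y < Real.sqrt (y^2 + k) := by
    have h1 : |y| < Real.sqrt (y^2 + k) := by
      rw [← Real.sqrt_sq_eq_abs]
      exact Real.sqrt_lt_sqrt (sq_nonneg y) (by linarith)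
    linarith [neg_abs_le y]
  have hs : Real.sqrt (x^2 + k) ^ 2 = x^2 + k := Real.sq_sqrt (by positivity)
  have ht : Real.sqrt (y^2 + k) ^ 2 = y^2 + k := Real.sq_sqrt (by positivity)
  nlinarith [mul_pos (show 0 < Real.sqrt (x^2+k) + x by linarith)
    (show 0 < Real.sqrt (y^2+k) + y by linarith)]

theorem tail_index_strictAnti_in_mu (c₀ d h σ : ℝ) (hσ : 0 < σ)
    (hdh : 0 < d + h) :
    StrictAnti (fun μ : ℝ => (1/2) * ((1 - 2*(μ - c₀)/σ^2) +
      Real.sqrt ((1 - 2*(μ - c₀)/σ^2)^2 + 8*(d+h)/σ^2))) := by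
  intro μ₁ μ₂ hlt
  have hσ2 : (0:ℝ) < σ^2 := by positivity
  have hk : 0 < 8*(d+h)/σ^2 := by positivity
  have ha : (1 - 2*(μ₂ - c₀)/σ^2) < (1 - 2*(μ₁ - c₀)/σ^2) := by
    have : 2*(μ₁ - c₀)/σ^2 < 2*(μ₂ - c₀)/σ^2 :=
      (div_lt_div_iff_of_pos_right hσ2).mpr (by linarith)
    linarith
  have := key_mono (8*(d+h)/σ^2) _ _ hk ha
  simp only
  linarith
end

section
/- Let α, η ∈ ℝ with α² + 4η > 0, and set γ := √(α² + 4η). Then for every w ∈ ℝ with w ≠ 0, the integral ∫₀^∞ exp(−ητ)·(4πτ)^(−1/2)·exp(−(w − ατ)²/(4τ)) dτ converges and equals (1/γ)·exp((αw − γ|w|)/2). -/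
open Real MeasureTheory Set

variable {a b : ℝ}

lemma gl_deriv (hb : 0 < b) (x : ℝ) (hx : 0 < x) :
    HasDerivWithinAt (fun u : ℝ => b*u - a/u) (b + a/x^2) (Set.Ioi 0) x := by
  have hinv : HasDerivAt (fun u : ℝ => u⁻¹) (-(x^2)⁻¹) x := hasDerivAt_inv hx.ne'
  have h1 : HasDerivAt (fun u : ℝ => b*u - a*u⁻¹) (b*1 - a * -(x^2)⁻¹) x :=
    ((hasDerivAt_id x).const_mul b).sub (hinv.const_mul a)
  have : b + a/x^2 = b*1 - a * -(x^2)⁻¹ := by field_simp; ring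
  rw [this]
  exact (h1.congr_of_eventuallyEq (by filter_upwards with u; rw [div_eq_mul_inv])).hasDerivWithinAt

lemma gl_inj (ha : 0 < a) (hb : 0 < b) :
    Set.InjOn (fun u : ℝ => b*u - a/u) (Set.Ioi 0) := by
  intro u hu v hv h
  simp only [Set.mem_Ioi] at hu hv
  simp only at h
  have h2 : (u - v) * (b*u*v + a) = 0 := by
    field_simp at h
    nlinarith [h]
  rcases mul_eq_zero.mp h2 with h3 | h3
  · linarith
  · exfalso; nlinarith [mul_pos (mul_pos hb hu) hv]

lemma gl_image (ha : 0 < a) (hb : 0 < b) :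
    (fun u : ℝ => b*u - a/u) '' (Set.Ioi 0) = Set.univ := by
  apply Set.eq_univ_of_forall
  intro y
  set s := Real.sqrt (y^2 + 4*(a*b)) with hs
  have hs2 : s^2 = y^2 + 4*(a*b) := Real.sq_sqrt (by positivity)
  have hsy : |y| < s := by
    rw [hs, ← Real.sqrt_sq_eq_abs]
    exact Real.sqrt_lt_sqrt (sq_nonneg y) (by nlinarith)
  have hypos : 0 < y + s := by
    rcases abs_lt.mp hsy with ⟨h1, _⟩; linarith
  refine ⟨(y + s)/(2*b), by simpa using by positivity, ?_⟩
  have hu : (y + s)/(2*b) ≠ 0 := by positivity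
  field_simp
  nlinarith [hs2]

lemma gl_integrable (ha : 0 < a) (hb : 0 < b) :
    IntegrableOn (fun u : ℝ => Real.exp (-(b*u - a/u)^2)) (Set.Ioi 0) := by
  have hbd : IntegrableOn (fun u : ℝ => Real.exp (2*(a*b)) * Real.exp (-b^2 * u^2)) (Set.Ioi 0) :=
    ((integrable_exp_neg_mul_sq (by positivity : (0:ℝ) < b^2)).const_mul _).integrableOn
  apply hbd.mono' 
  · have hc : ContinuousOn (fun u : ℝ => Real.exp (-(b*u - a/u)^2)) (Set.Ioi 0) :=
      Real.continuous_exp.comp_continuousOn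
        ((((continuous_const.mul continuous_id).continuousOn.sub
          (continuousOn_const.div continuousOn_id fun x hx => ne_of_gt hx)).pow 2).neg)
    exact hc.aestronglyMeasurable measurableSet_Ioi
  · filter_upwards [ae_restrict_mem measurableSet_Ioi] with u hu
    simp only [Set.mem_Ioi] at hu
    rw [Real.norm_eq_abs, abs_of_pos (Real.exp_pos _), ← Real.exp_add]
    apply Real.exp_le_exp.mpr
    have h1 : (b*u - a/u)^2 = b^2*u^2 - 2*(a*b) + a^2/u^2 := by field_simp; ring
    have h2 : 0 ≤ a^2/u^2 := by positivity
    nlinarith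

lemma gl_aux1 (ha : 0 < a) (hb : 0 < b) :
    ∫ u in Set.Ioi (0:ℝ), (b + a/u^2) * Real.exp (-(b*u - a/u)^2) = Real.sqrt Real.pi := by
  have := MeasureTheory.integral_image_eq_integral_abs_deriv_smul measurableSet_Ioi
    (fun x hx => gl_deriv hb x hx) (gl_inj ha hb) (fun v => Real.exp (-v^2))
  rw [gl_image ha hb] at this
  rw [Measure.restrict_univ] at this
  have hg : ∫ v : ℝ, Real.exp (-v^2) = Real.sqrt Real.pi := by
    simpa using integral_gaussian 1
  rw [hg] at this
  rw [this]
  apply setIntegral_congr_fun measurableSet_Ioi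
  intro x hx
  simp only [Set.mem_Ioi] at hx
  simp only [smul_eq_mul]
  rw [abs_of_pos (by positivity)]

-- reciprocal substitution
lemma gl_recip_deriv (ha : 0 < a) (hb : 0 < b) (x : ℝ) (hx : 0 < x) :
    HasDerivWithinAt (fun u : ℝ => a/(b*u)) (-(a/(b*x^2))) (Set.Ioi 0) x := by
  have hinv : HasDerivAt (fun u : ℝ => u⁻¹) (-(x^2)⁻¹) x := hasDerivAt_inv hx.ne'
  have h1 : HasDerivAt (fun u : ℝ => (a/b) * u⁻¹) ((a/b) * -(x^2)⁻¹) x := hinv.const_mul _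
  have : -(a/(b*x^2)) = (a/b) * -(x^2)⁻¹ := by field_simp
  rw [this]
  exact (h1.congr_of_eventuallyEq (by filter_upwards with u; rw [div_eq_mul_inv, mul_inv]; ring)).hasDerivWithinAt

lemma gl_recip_inj (ha : 0 < a) (hb : 0 < b) :
    Set.InjOn (fun u : ℝ => a/(b*u)) (Set.Ioi 0) := by
  intro u hu v hv h
  simp only [Set.mem_Ioi] at hu hv
  simp only at h
  field_simp at h
  exact h.symm

lemma gl_recip_image (ha : 0 < a) (hb : 0 < b) :
    (fun u : ℝ => a/(b*u)) '' (Set.Ioi 0) = Set.Ioi 0 := by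
  ext x
  simp only [Set.mem_image, Set.mem_Ioi]
  constructor
  · rintro ⟨u, hu, rfl⟩; positivity
  · intro hx; exact ⟨a/(b*x), by positivity, by field_simp⟩

lemma gl_sym_ptwise (ha : 0 < a) (hb : 0 < b) (x : ℝ) (hx : 0 < x) :
    |(-(a/(b*x^2)))| • Real.exp (-(b*(a/(b*x)) - a/(a/(b*x)))^2)
      = (a/(b*x^2)) * Real.exp (-(b*x - a/x)^2) := by
  have h1 : b*(a/(b*x)) - a/(a/(b*x)) = -(b*x - a/x) := by field_simp; ring
  rw [h1, abs_neg, abs_of_pos (by positivity), neg_sq, smul_eq_mul]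

lemma gl_sym (ha : 0 < a) (hb : 0 < b) :
    ∫ u in Set.Ioi (0:ℝ), Real.exp (-(b*u - a/u)^2)
      = ∫ u in Set.Ioi (0:ℝ), (a/(b*u^2)) * Real.exp (-(b*u - a/u)^2) := by
  have := MeasureTheory.integral_image_eq_integral_abs_deriv_smul measurableSet_Ioi
    (fun x hx => gl_recip_deriv ha hb x hx) (gl_recip_inj ha hb)
    (fun v => Real.exp (-(b*v - a/v)^2))
  rw [gl_recip_image ha hb] at this
  rw [this]
  exact setIntegral_congr_fun measurableSet_Ioi fun x hx => gl_sym_ptwise ha hb x hx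

lemma gl_sym_integrable (ha : 0 < a) (hb : 0 < b) :
    IntegrableOn (fun u : ℝ => (a/(b*u^2)) * Real.exp (-(b*u - a/u)^2)) (Set.Ioi 0) := by
  have := (MeasureTheory.integrableOn_image_iff_integrableOn_abs_deriv_smul measurableSet_Ioi
    (fun x hx => gl_recip_deriv ha hb x hx) (gl_recip_inj ha hb)
    (fun v => Real.exp (-(b*v - a/v)^2)))
  rw [gl_recip_image ha hb] at this
  have h2 := this.mp (gl_integrable ha hb)
  exact h2.congr_fun (fun x hx => gl_sym_ptwise ha hb x hx) measurableSet_Ioi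

lemma gl_main (ha : 0 < a) (hb : 0 < b) :
    ∫ u in Set.Ioi (0:ℝ), Real.exp (-(b*u - a/u)^2) = Real.sqrt Real.pi / (2*b) := by
  have key := gl_aux1 ha hb
  have hsplit : ∀ u ∈ Set.Ioi (0:ℝ), (b + a/u^2) * Real.exp (-(b*u - a/u)^2)
      = b * Real.exp (-(b*u - a/u)^2) + b * ((a/(b*u^2)) * Real.exp (-(b*u - a/u)^2)) := by
    intro u hu
    simp only [Set.mem_Ioi] at hu
    field_simp
  rw [setIntegral_congr_fun measurableSet_Ioi hsplit] at key
  rw [integral_add ((gl_integrable ha hb).const_mul b) ((gl_sym_integrable ha hb).const_mul b),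
    integral_const_mul, integral_const_mul, ← gl_sym ha hb] at key
  have h2b : (0:ℝ) < 2*b := by positivity
  field_simp at key ⊢
  linarith

lemma gl_exp_eq (ha : 0 < a) (hb : 0 < b) (u : ℝ) (hu : 0 < u) :
    Real.exp (-(a^2/u^2 + b^2*u^2)) = Real.exp (-(2*(a*b))) * Real.exp (-(b*u - a/u)^2) := by
  rw [← Real.exp_add]
  congr 1
  field_simp
  ring

lemma gl2_integrable (ha : 0 < a) (hb : 0 < b) :
    IntegrableOn (fun u : ℝ => Real.exp (-(a^2/u^2 + b^2*u^2))) (Set.Ioi 0) := by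
  exact MeasureTheory.IntegrableOn.congr_fun ((gl_integrable ha hb).const_mul _)
    (fun x hx => (gl_exp_eq ha hb x hx).symm) measurableSet_Ioi

lemma gl2_main (ha : 0 < a) (hb : 0 < b) :
    ∫ u in Set.Ioi (0:ℝ), Real.exp (-(a^2/u^2 + b^2*u^2))
      = Real.sqrt Real.pi / (2*b) * Real.exp (-(2*(a*b))) := by
  rw [setIntegral_congr_fun measurableSet_Ioi (fun x hx => gl_exp_eq ha hb x hx),
    integral_const_mul, gl_main ha hb]
  ring

lemma sq_deriv (x : ℝ) (hx : x ∈ Set.Ioi (0:ℝ)) :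
    HasDerivWithinAt (fun u : ℝ => u^2) (2*x) (Set.Ioi 0) x := by
  simpa using (hasDerivAt_pow 2 x).hasDerivWithinAt

lemma sq_inj : Set.InjOn (fun u : ℝ => u^2) (Set.Ioi 0) := by
  intro u hu v hv h
  simp only [Set.mem_Ioi] at hu hv
  simp only at h
  have h1 : (u - v) * (u + v) = 0 := by nlinarith
  rcases mul_eq_zero.mp h1 with h2 | h2
  · linarith
  · exfalso; linarith

lemma sq_image : (fun u : ℝ => u^2) '' (Set.Ioi 0) = Set.Ioi 0 := by
  ext x
  simp only [Set.mem_image, Set.mem_Ioi]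
  constructor
  · rintro ⟨u, hu, rfl⟩; positivity
  · intro hx; exact ⟨Real.sqrt x, Real.sqrt_pos.mpr hx, Real.sq_sqrt hx.le⟩

lemma sq_ptwise (ha : 0 < a) (hb : 0 < b) (u : ℝ) (hu : 0 < u) :
    |2*u| • ((u^2)^(-(1:ℝ)/2) * Real.exp (-(a^2/(u^2) + b^2*(u^2))))
      = 2 * Real.exp (-(a^2/u^2 + b^2*u^2)) := by
  have h1 : ((u^2 : ℝ))^(-(1:ℝ)/2) = u⁻¹ := by
    rw [show (-(1:ℝ)/2) = -(1/2) by norm_num, Real.rpow_neg (by positivity),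
      ← Real.sqrt_eq_rpow, Real.sqrt_sq hu.le]
  rw [h1, abs_of_pos (by positivity), smul_eq_mul]
  field_simp

lemma gl3_integrable (ha : 0 < a) (hb : 0 < b) :
    IntegrableOn (fun τ : ℝ => τ^(-(1:ℝ)/2) * Real.exp (-(a^2/τ + b^2*τ))) (Set.Ioi 0) := by
  have hiff := MeasureTheory.integrableOn_image_iff_integrableOn_abs_deriv_smul
    measurableSet_Ioi sq_deriv sq_inj
    (fun τ : ℝ => τ^(-(1:ℝ)/2) * Real.exp (-(a^2/τ + b^2*τ)))
  rw [sq_image] at hiff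
  apply hiff.mpr
  exact MeasureTheory.IntegrableOn.congr_fun ((gl2_integrable ha hb).const_mul 2)
    (fun u hu => (sq_ptwise ha hb u hu).symm) measurableSet_Ioi

lemma gl3_main (ha : 0 < a) (hb : 0 < b) :
    ∫ τ in Set.Ioi (0:ℝ), τ^(-(1:ℝ)/2) * Real.exp (-(a^2/τ + b^2*τ))
      = Real.sqrt Real.pi / b * Real.exp (-(2*(a*b))) := by
  have key := MeasureTheory.integral_image_eq_integral_abs_deriv_smul
    measurableSet_Ioi sq_deriv sq_inj
    (fun τ : ℝ => τ^(-(1:ℝ)/2) * Real.exp (-(a^2/τ + b^2*τ)))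
  rw [sq_image] at key
  rw [key, setIntegral_congr_fun measurableSet_Ioi (fun u hu => sq_ptwise ha hb u hu),
    integral_const_mul, gl2_main ha hb]
  field_simp

theorem discounted_heat_kernel_laplace (α η : ℝ) (hαη : 0 < α^2 + 4*η)
    (γ : ℝ) (hγ : γ = Real.sqrt (α^2 + 4*η)) :
    ∀ w : ℝ, w ≠ 0 →
      MeasureTheory.IntegrableOn
        (fun τ : ℝ => Real.exp (-η*τ) * (4*Real.pi*τ)^(-(1:ℝ)/2) *
          Real.exp (-(w - α*τ)^2/(4*τ))) (Set.Ioi 0) ∧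
      ∫ τ in Set.Ioi (0:ℝ), Real.exp (-η*τ) * (4*Real.pi*τ)^(-(1:ℝ)/2) *
          Real.exp (-(w - α*τ)^2/(4*τ)) =
        (1/γ) * Real.exp ((α*w - γ*|w|)/2) := by
  intro w hw
  have hγpos : 0 < γ := hγ ▸ Real.sqrt_pos.mpr hαη
  have hγsq : γ^2 = α^2 + 4*η := by rw [hγ]; exact Real.sq_sqrt hαη.le
  set a : ℝ := |w|/2 with hadef
  set b : ℝ := γ/2 with hbdef
  have ha : 0 < a := by have := abs_pos.mpr hw; positivity
  have hb : 0 < b := by positivity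
  have ha2 : a^2 = w^2/4 := by rw [hadef, div_pow, sq_abs]; norm_num
  have hb2 : b^2 = (α^2 + 4*η)/4 := by rw [hbdef, div_pow, hγsq]; norm_num
  have hsp : (0:ℝ) < Real.sqrt Real.pi := Real.sqrt_pos.mpr Real.pi_pos
  have h4pi : ((4*Real.pi):ℝ)^(-(1:ℝ)/2) = 1/(2*Real.sqrt Real.pi) := by
    rw [show (-(1:ℝ)/2) = -(1/2) by norm_num, Real.rpow_neg (by positivity),
      ← Real.sqrt_eq_rpow, show (4*Real.pi:ℝ) = 2^2*Real.pi by norm_num,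
      Real.sqrt_mul (by positivity), Real.sqrt_sq (by norm_num : (0:ℝ) ≤ 2)]
    rw [one_div]
  set K : ℝ := Real.exp (α*w/2) / (2*Real.sqrt Real.pi) with hKdef
  have hpt : ∀ τ ∈ Set.Ioi (0:ℝ),
      Real.exp (-η*τ) * (4*Real.pi*τ)^(-(1:ℝ)/2) * Real.exp (-(w - α*τ)^2/(4*τ))
        = K * (τ^(-(1:ℝ)/2) * Real.exp (-(a^2/τ + b^2*τ))) := by
    intro τ hτ
    simp only [Set.mem_Ioi] at hτ
    have hmul : ((4*Real.pi*τ):ℝ)^(-(1:ℝ)/2)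
        = (1/(2*Real.sqrt Real.pi)) * τ^(-(1:ℝ)/2) := by
      rw [Real.mul_rpow (by positivity) hτ.le, h4pi]
    have hexp : Real.exp (-η*τ) * Real.exp (-(w - α*τ)^2/(4*τ))
        = Real.exp (α*w/2) * Real.exp (-(a^2/τ + b^2*τ)) := by
      rw [← Real.exp_add, ← Real.exp_add]
      congr 1
      rw [ha2, hb2]
      field_simp
      ring
    calc Real.exp (-η*τ) * (4*Real.pi*τ)^(-(1:ℝ)/2) * Real.exp (-(w - α*τ)^2/(4*τ))
        = (1/(2*Real.sqrt Real.pi)) * τ^(-(1:ℝ)/2)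
            * (Real.exp (-η*τ) * Real.exp (-(w - α*τ)^2/(4*τ))) := by rw [hmul]; ring
      _ = K * (τ^(-(1:ℝ)/2) * Real.exp (-(a^2/τ + b^2*τ))) := by
          rw [hexp, hKdef]; ring
  constructor
  · exact MeasureTheory.IntegrableOn.congr_fun ((gl3_integrable ha hb).const_mul K)
      (fun τ hτ => (hpt τ hτ).symm) measurableSet_Ioi
  · rw [setIntegral_congr_fun measurableSet_Ioi hpt, integral_const_mul, gl3_main ha hb]
    have hE : Real.exp ((α*w - γ*|w|)/2) = Real.exp (α*w/2) * Real.exp (-(2*(a*b))) := by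
      rw [← Real.exp_add, hadef, hbdef]
      congr 1
      ring
    rw [hE, hKdef, hbdef]
    field_simp
end

section
/- Let α ∈ ℝ, z₀ > 0, and η ∈ ℝ with α² + 4η > 0, and set γ := √(α² + 4η). Define the killed density φ(z, τ) := (4πτ)^(−1/2)·[exp(−(z − z₀ − ατ)²/(4τ)) − exp(−α·z₀)·exp(−(z + z₀ − ατ)²/(4τ))]. Then for every z > 0, ∫₀^∞ exp(−ητ)·φ(z, τ) dτ = (1/γ)·[exp((α(z − z₀) − γ|z − z₀|)/2) − exp(−α·z₀)·exp((α(z + z₀) − γ(z + z₀))/2)]. In particular, for z > z₀ this expression equals (1/γ)·(1 − exp(−γ·z₀))·exp(−(γ − α)(z − z₀)/2), so the exponentially discounted age-integrated density decays in z as exp(−(γ − α)z/2), i.e. as a power law of exponent m = (γ − α)/2 in the original size variable s = e^z. -/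
open Real MeasureTheory
open Set


section
variable {a b : ℝ}

lemma h_hasDeriv (hb : 0 < b) {t : ℝ} (ht : 0 < t) :
    HasDerivAt (fun u => Real.sqrt b * Real.sqrt u - Real.sqrt a / Real.sqrt u)
      (Real.sqrt b / (2 * Real.sqrt t) + Real.sqrt a / (2 * (t * Real.sqrt t))) t := by
  have hst : Real.sqrt t ≠ 0 := ne_of_gt (Real.sqrt_pos.mpr ht)
  have d1 := Real.hasDerivAt_sqrt (ne_of_gt ht)
  have d2 := (d1.const_mul (Real.sqrt b)).sub ((d1.inv hst).const_mul (Real.sqrt a))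
  have e : HasDerivAt (fun u => Real.sqrt b * Real.sqrt u - Real.sqrt a / Real.sqrt u)
      (Real.sqrt b * (1 / (2 * Real.sqrt t)) -
        Real.sqrt a * (-(1 / (2 * Real.sqrt t)) / Real.sqrt t ^ 2)) t := by
    simpa only [div_eq_mul_inv, Pi.sub_def, Pi.inv_apply] using d2
  convert e using 1
  rw [Real.sq_sqrt ht.le]
  have ht' : t ≠ 0 := ht.ne'
  field_simp
  ring

lemma h_image (ha : 0 < a) (hb : 0 < b) :
    (fun t => Real.sqrt b * Real.sqrt t - Real.sqrt a / Real.sqrt t) '' Set.Ioi 0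
      = Set.univ := by
  have hsa : 0 < Real.sqrt a := Real.sqrt_pos.mpr ha
  have hsb : 0 < Real.sqrt b := Real.sqrt_pos.mpr hb
  apply Set.eq_univ_of_forall
  intro y
  set D := Real.sqrt (y^2 + 4*(Real.sqrt a * Real.sqrt b)) with hD
  have hD2 : D^2 = y^2 + 4*(Real.sqrt a * Real.sqrt b) :=
    Real.sq_sqrt (by positivity)
  have hDy : |y| < D := by
    calc |y| = Real.sqrt (y^2) := (Real.sqrt_sq_eq_abs y).symm
      _ < D := by rw [hD]; exact Real.sqrt_lt_sqrt (sq_nonneg _) (by nlinarith)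
  set s := (y + D) / (2 * Real.sqrt b) with hs
  have hspos : 0 < s := by
    apply div_pos _ (by positivity)
    have := neg_abs_le y
    linarith
  refine ⟨s^2, by exact pow_pos hspos 2, ?_⟩
  have h1 : s * (2 * Real.sqrt b) = y + D := by
    rw [hs]; field_simp
  have hkey2 : 2*Real.sqrt b*(Real.sqrt b*s*s - y*s) = 2*Real.sqrt b*Real.sqrt a := by
    linear_combination (Real.sqrt b*s + (D-y)/2) * h1 + (1/2) * hD2
  have hkey : Real.sqrt b*s*s - y*s = Real.sqrt a :=
    mul_left_cancel₀ (by positivity : 2*Real.sqrt b ≠ 0) hkey2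
  simp only [Real.sqrt_sq hspos.le]
  rw [show Real.sqrt a = Real.sqrt b*s*s - y*s from hkey.symm]
  field_simp
  ring

lemma h_injOn (ha : 0 ≤ a) (hb : 0 < b) :
    Set.InjOn (fun t => Real.sqrt b * Real.sqrt t - Real.sqrt a / Real.sqrt t)
      (Set.Ioi 0) := by
  apply StrictMonoOn.injOn
  intro s hs t ht hst
  have hs0 : (0:ℝ) < s := hs
  have ht0 : (0:ℝ) < t := ht
  have h1 : Real.sqrt s < Real.sqrt t := Real.sqrt_lt_sqrt hs0.le hst
  have hss : 0 < Real.sqrt s := Real.sqrt_pos.mpr hs0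
  have h2 : Real.sqrt b * Real.sqrt s < Real.sqrt b * Real.sqrt t :=
    mul_lt_mul_of_pos_left h1 (Real.sqrt_pos.mpr hb)
  have h3 : Real.sqrt a / Real.sqrt t ≤ Real.sqrt a / Real.sqrt s := by
    gcongr
  dsimp only
  linarith

end

section
variable {a b : ℝ}

lemma refl_image (ha : 0 < a) (hb : 0 < b) :
    (fun t => a/(b*t)) '' Set.Ioi 0 = Set.Ioi 0 := by
  ext x
  constructor
  · rintro ⟨t, ht, rfl⟩
    exact div_pos ha (mul_pos hb ht)
  · intro hx
    refine ⟨a/(b*x), div_pos ha (mul_pos hb hx), ?_⟩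
    field_simp
lemma refl_injOn (ha : 0 < a) (hb : 0 < b) :
    Set.InjOn (fun t => a/(b*t)) (Set.Ioi 0) := by
  intro s hs t ht h
  have hs0 : (0:ℝ) < s := hs
  have ht0 : (0:ℝ) < t := ht
  simp only at h
  have h' := (div_eq_div_iff (by positivity) (by positivity)).mp h
  have h2 := mul_left_cancel₀ ha.ne' h'
  exact (mul_left_cancel₀ hb.ne' h2).symm
lemma refl_hasDeriv (ha : 0 < a) (hb : 0 < b) :
    ∀ t ∈ Set.Ioi (0:ℝ), HasDerivWithinAt (fun t => a/(b*t))
      ((a/b) * (-(t^2)⁻¹)) (Set.Ioi 0) t := by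
  intro t ht
  have ht0 : (0:ℝ) < t := ht
  have heq : (fun t : ℝ => a/(b*t)) = fun t => (a/b) * t⁻¹ := by
    funext u; rw [div_mul_eq_div_div, div_eq_mul_inv]
  rw [heq]
  exact ((hasDerivAt_inv ht0.ne').const_mul (a/b)).hasDerivWithinAt
lemma h_refl (ha : 0 < a) (hb : 0 < b) {t : ℝ} (ht : 0 < t) :
    Real.sqrt b * Real.sqrt (a/(b*t)) - Real.sqrt a / Real.sqrt (a/(b*t))
      = -(Real.sqrt b * Real.sqrt t - Real.sqrt a / Real.sqrt t) := by
  have hst : 0 < Real.sqrt t := Real.sqrt_pos.mpr ht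
  have hsb : 0 < Real.sqrt b := Real.sqrt_pos.mpr hb
  have hsa : 0 < Real.sqrt a := Real.sqrt_pos.mpr ha
  rw [Real.sqrt_div ha.le, Real.sqrt_mul hb.le]
  field_simp
  ring
end


lemma sq_image_Ioi : (fun x : ℝ => x^2) '' Set.Ioi 0 = Set.Ioi 0 := by
  ext t
  constructor
  · rintro ⟨x, hx, rfl⟩; exact pow_pos (show (0:ℝ) < x from hx) 2
  · intro ht
    exact ⟨Real.sqrt t, Real.sqrt_pos.mpr ht, Real.sq_sqrt (le_of_lt ht)⟩

lemma sq_injOn : Set.InjOn (fun x : ℝ => x^2) (Set.Ioi 0) := by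
  intro p hp q hq h
  simp only at h
  calc p = Real.sqrt (p^2) := (Real.sqrt_sq (le_of_lt hp)).symm
    _ = Real.sqrt (q^2) := by rw [h]
    _ = q := Real.sqrt_sq (le_of_lt hq)

lemma sq_hasDeriv : ∀ x ∈ Set.Ioi (0:ℝ),
    HasDerivWithinAt (fun x : ℝ => x^2) (2*x) (Set.Ioi 0) x := by
  intro x _
  simpa using (hasDerivAt_pow 2 x).hasDerivWithinAt

lemma aux_gaussian_half (b : ℝ) (hb : 0 < b) :
    IntegrableOn (fun t => Real.exp (-(b*t)) / Real.sqrt t) (Set.Ioi 0) ∧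
    ∫ t in Set.Ioi (0:ℝ), Real.exp (-(b*t)) / Real.sqrt t = Real.sqrt (π/b) := by
  have heq : Set.EqOn (fun x : ℝ => |2*x| • (Real.exp (-(b*x^2)) / Real.sqrt (x^2)))
      (fun x : ℝ => 2 * Real.exp (-b * x^2)) (Set.Ioi 0) := by
    intro x hx
    have hx0 : (0:ℝ) < x := hx
    simp only [smul_eq_mul]
    rw [Real.sqrt_sq (le_of_lt hx0), abs_of_pos (by linarith)]
    field_simp
  constructor
  · rw [← sq_image_Ioi,
      integrableOn_image_iff_integrableOn_abs_deriv_smul measurableSet_Ioi sq_hasDeriv sq_injOn]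
    exact (IntegrableOn.congr_fun
      (((integrable_exp_neg_mul_sq hb).integrableOn).const_mul 2) heq.symm measurableSet_Ioi)
  · rw [← sq_image_Ioi,
      integral_image_eq_integral_abs_deriv_smul measurableSet_Ioi sq_hasDeriv sq_injOn,
      MeasureTheory.setIntegral_congr_fun measurableSet_Ioi heq,
      MeasureTheory.integral_const_mul, integral_gaussian_Ioi]
    ring

lemma key_laplace (a b : ℝ) (ha : 0 ≤ a) (hb : 0 < b) :
    IntegrableOn (fun t => Real.exp (-(a/t) - b*t) / Real.sqrt t) (Set.Ioi 0) ∧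
    ∫ t in Set.Ioi (0:ℝ), Real.exp (-(a/t) - b*t) / Real.sqrt t
      = Real.sqrt π / Real.sqrt b * Real.exp (-2 * Real.sqrt (a*b)) := by
  rcases eq_or_lt_of_le ha with rfl | ha
  · simp only [zero_div, neg_zero, zero_sub, zero_mul, Real.sqrt_zero, mul_zero,
      Real.exp_zero, mul_one]
    obtain ⟨hint, hval⟩ := aux_gaussian_half b hb
    exact ⟨hint, by rw [hval]; exact Real.sqrt_div pi_pos.le b⟩
  · -- a > 0
    set sa := Real.sqrt a with hsa_def
    set sb := Real.sqrt b with hsb_def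
    have hsa : 0 < sa := Real.sqrt_pos.mpr ha
    have hsb : 0 < sb := Real.sqrt_pos.mpr hb
    set h : ℝ → ℝ := fun t => sb * Real.sqrt t - sa / Real.sqrt t with hh_def
    set H' : ℝ → ℝ := fun t => sb / (2 * Real.sqrt t) + sa / (2 * (t * Real.sqrt t))
      with hH'_def
    have Hder : ∀ t ∈ Set.Ioi (0:ℝ), HasDerivWithinAt h (H' t) (Set.Ioi 0) t :=
      fun t ht => (h_hasDeriv hb ht).hasDerivWithinAt
    have hinj : Set.InjOn h (Set.Ioi 0) := h_injOn ha.le hb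
    have gauss_int : Integrable (fun x : ℝ => Real.exp (-x^2)) := by
      simpa using integrable_exp_neg_mul_sq (one_pos)
    have gauss_val : ∫ x : ℝ, Real.exp (-x^2) = Real.sqrt π := by
      simpa using integral_gaussian 1
    -- change of variables to (0,∞)
    have E3 := (integral_image_eq_integral_abs_deriv_smul measurableSet_Ioi Hder hinj
      (fun x => Real.exp (-x^2))).symm
    rw [h_image ha hb, MeasureTheory.Measure.restrict_univ, gauss_val] at E3
    have Gint : IntegrableOn (fun t => |H' t| • Real.exp (-(h t)^2)) (Set.Ioi 0) :=
      (integrableOn_image_iff_integrableOn_abs_deriv_smul measurableSet_Ioi Hder hinj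
        (fun x => Real.exp (-x^2))).mp (by rw [h_image ha hb]; exact gauss_int.integrableOn)
    -- positivity of H'
    have H'pos : ∀ t : ℝ, 0 < t → 0 < H' t := by
      intro t ht
      have : 0 < Real.sqrt t := Real.sqrt_pos.mpr ht
      apply add_pos <;> positivity
    -- continuity
    have hcont : ContinuousOn h (Set.Ioi 0) := by
      apply ContinuousOn.sub
      · exact continuousOn_const.mul Real.continuous_sqrt.continuousOn
      · exact continuousOn_const.div Real.continuous_sqrt.continuousOn
          (fun t ht => ne_of_gt (Real.sqrt_pos.mpr ht))
    have hcont_exp : ContinuousOn (fun t => Real.exp (-(h t)^2)) (Set.Ioi 0) :=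
      Real.continuous_exp.comp_continuousOn ((hcont.pow 2).neg)
    have hcont1 : ContinuousOn (fun t => Real.exp (-(h t)^2) / Real.sqrt t)
        (Set.Ioi 0) :=
      hcont_exp.div Real.continuous_sqrt.continuousOn
        (fun t ht => ne_of_gt (Real.sqrt_pos.mpr ht))
    have hcont2 : ContinuousOn (fun t => Real.exp (-(h t)^2) / (t * Real.sqrt t))
        (Set.Ioi 0) :=
      hcont_exp.div (continuousOn_id.mul Real.continuous_sqrt.continuousOn)
        (fun t ht => by
          have : (0:ℝ) < t := ht
          positivity)
    -- integrability of the two pieces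
    have f1int : IntegrableOn (fun t => Real.exp (-(h t)^2) / Real.sqrt t)
        (Set.Ioi 0) := by
      apply Integrable.mono' (Gint.const_mul (2/sb))
        (hcont1.aestronglyMeasurable measurableSet_Ioi)
      rw [ae_restrict_iff' measurableSet_Ioi]
      filter_upwards with t ht
      have ht0 : (0:ℝ) < t := ht
      have hst : 0 < Real.sqrt t := Real.sqrt_pos.mpr ht0
      have hE : 0 < Real.exp (-(h t)^2) := Real.exp_pos _
      rw [Real.norm_eq_abs, abs_of_pos (by positivity), smul_eq_mul,
        abs_of_pos (H'pos t ht0)]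
      rw [hH'_def]
      have key : 2/sb * ((sb / (2 * Real.sqrt t) + sa / (2 * (t * Real.sqrt t)))
          * Real.exp (-(h t)^2))
          = Real.exp (-(h t)^2) / Real.sqrt t
            + sa/(sb*(t*Real.sqrt t)) * Real.exp (-(h t)^2) := by
        field_simp
      rw [key]
      have : 0 ≤ sa/(sb*(t*Real.sqrt t)) * Real.exp (-(h t)^2) := by positivity
      linarith
    have f2int : IntegrableOn (fun t => Real.exp (-(h t)^2) / (t * Real.sqrt t))
        (Set.Ioi 0) := by
      apply Integrable.mono' (Gint.const_mul (2/sa))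
        (hcont2.aestronglyMeasurable measurableSet_Ioi)
      rw [ae_restrict_iff' measurableSet_Ioi]
      filter_upwards with t ht
      have ht0 : (0:ℝ) < t := ht
      have hst : 0 < Real.sqrt t := Real.sqrt_pos.mpr ht0
      have hE : 0 < Real.exp (-(h t)^2) := Real.exp_pos _
      rw [Real.norm_eq_abs, abs_of_pos (by positivity), smul_eq_mul,
        abs_of_pos (H'pos t ht0)]
      rw [hH'_def]
      have key : 2/sa * ((sb / (2 * Real.sqrt t) + sa / (2 * (t * Real.sqrt t)))
          * Real.exp (-(h t)^2))
          = Real.exp (-(h t)^2) / (t * Real.sqrt t)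
            + sb/(sa*Real.sqrt t) * Real.exp (-(h t)^2) := by
        field_simp
        ring
      rw [key]
      have : 0 ≤ sb/(sa*Real.sqrt t) * Real.exp (-(h t)^2) := by positivity
      linarith
    set I := ∫ t in Set.Ioi (0:ℝ), Real.exp (-(h t)^2) / Real.sqrt t with hI_def
    set J := ∫ t in Set.Ioi (0:ℝ), Real.exp (-(h t)^2) / (t * Real.sqrt t) with hJ_def
    -- split the Gaussian integral
    have split : Real.sqrt π = sb/2 * I + sa/2 * J := by
      rw [← E3]
      rw [MeasureTheory.setIntegral_congr_fun measurableSet_Ioi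
        (show Set.EqOn (fun t => |H' t| • Real.exp (-(h t)^2))
          (fun t => sb/2 * (Real.exp (-(h t)^2) / Real.sqrt t)
            + sa/2 * (Real.exp (-(h t)^2) / (t * Real.sqrt t))) (Set.Ioi 0) by
          intro t ht
          have ht0 : (0:ℝ) < t := ht
          have hst : 0 < Real.sqrt t := Real.sqrt_pos.mpr ht0
          simp only [smul_eq_mul]
          rw [abs_of_pos (H'pos t ht0), hH'_def]
          field_simp)]
      rw [MeasureTheory.integral_add (f1int.const_mul _) (f2int.const_mul _),
        MeasureTheory.integral_const_mul, MeasureTheory.integral_const_mul]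
    -- reflection identity I = (sa/sb) * J
    have refl : I = sa/sb * J := by
      have img := refl_image ha hb
      calc I = ∫ x in (fun t => a/(b*t)) '' Set.Ioi 0,
            Real.exp (-(h x)^2) / Real.sqrt x := by rw [img]
        _ = ∫ t in Set.Ioi (0:ℝ), |(a/b) * (-(t^2)⁻¹)| •
              (Real.exp (-(h (a/(b*t)))^2) / Real.sqrt (a/(b*t))) :=
            integral_image_eq_integral_abs_deriv_smul measurableSet_Ioi
              (refl_hasDeriv ha hb) (refl_injOn ha hb) _
        _ = ∫ t in Set.Ioi (0:ℝ), sa/sb * (Real.exp (-(h t)^2) / (t * Real.sqrt t)) := by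
            apply MeasureTheory.setIntegral_congr_fun measurableSet_Ioi
            intro t ht
            have ht0 : (0:ℝ) < t := ht
            have hst : 0 < Real.sqrt t := Real.sqrt_pos.mpr ht0
            have haa : sa * sa = a := Real.mul_self_sqrt ha.le
            have hbb : sb * sb = b := Real.mul_self_sqrt hb.le
            have h1 : h (a/(b*t)) = -(h t) := h_refl ha hb ht0
            have h2 : Real.sqrt (a/(b*t)) = sa/(sb*Real.sqrt t) := by
              rw [Real.sqrt_div ha.le, Real.sqrt_mul hb.le]
            simp only [smul_eq_mul, h1, neg_sq, h2]
            rw [show ((a/b) * (-(t^2)⁻¹)) = -((a/b)*(t^2)⁻¹) from by ring, abs_neg,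
              abs_of_pos (by positivity : (0:ℝ) < (a/b)*(t^2)⁻¹)]
            have htt : Real.sqrt t * Real.sqrt t = t := Real.mul_self_sqrt ht0.le
            field_simp
            linear_combination (a*sb^2*htt + a*t*hbb - t*b*haa)
        _ = sa/sb * J := MeasureTheory.integral_const_mul _ _
    have hIval : I = Real.sqrt π / sb := by
      have hJI : J = sb/sa * I := by
        rw [refl]; field_simp
      have : Real.sqrt π = sb * I := by
        rw [split, hJI]; field_simp; ring
      rw [this]; field_simp
    -- conclude
    have expeq : Set.EqOn (fun t => Real.exp (-(a/t) - b*t) / Real.sqrt t)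
        (fun t => Real.exp (-2*(sa*sb)) * (Real.exp (-(h t)^2) / Real.sqrt t))
        (Set.Ioi 0) := by
      intro t ht
      have ht0 : (0:ℝ) < t := ht
      have hst : 0 < Real.sqrt t := Real.sqrt_pos.mpr ht0
      have h1 : (sb*Real.sqrt t)^2 = b*t := by
        rw [mul_pow, hsb_def, Real.sq_sqrt hb.le, Real.sq_sqrt ht0.le]
      have h2 : (sa/Real.sqrt t)^2 = a/t := by
        rw [div_pow, hsa_def, Real.sq_sqrt ha.le, Real.sq_sqrt ht0.le]
      have h3 : (sb*Real.sqrt t)*(sa/Real.sqrt t) = sa*sb := by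
        field_simp
      have hexp : -(a/t) - b*t = -2*(sa*sb) + (-(h t)^2) := by
        have : (h t)^2 = (sb*Real.sqrt t)^2 - 2*((sb*Real.sqrt t)*(sa/Real.sqrt t))
            + (sa/Real.sqrt t)^2 := by rw [hh_def]; ring
        rw [this, h1, h2, h3]; ring
      simp only
      rw [hexp, Real.exp_add, mul_div_assoc]
    constructor
    · exact MeasureTheory.IntegrableOn.congr_fun (f1int.const_mul _) expeq.symm
        measurableSet_Ioi
    · rw [MeasureTheory.setIntegral_congr_fun measurableSet_Ioi expeq,
        MeasureTheory.integral_const_mul, ← hI_def, hIval, Real.sqrt_mul ha.le]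
      ring

theorem discounted_killed_density_power_law (α z₀ η : ℝ) (hz₀ : 0 < z₀)
    (hαη : 0 < α^2 + 4*η) (γ : ℝ) (hγ : γ = Real.sqrt (α^2 + 4*η))
    (φ : ℝ → ℝ → ℝ)
    (hφ : ∀ z τ, φ z τ = (4*Real.pi*τ)^(-(1:ℝ)/2) *
      (Real.exp (-(z - z₀ - α*τ)^2/(4*τ)) -
        Real.exp (-α*z₀) * Real.exp (-(z + z₀ - α*τ)^2/(4*τ)))) :
    ∀ z : ℝ, 0 < z →
      (∫ τ in Set.Ioi (0:ℝ), Real.exp (-η*τ) * φ z τ =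
        (1/γ) * (Real.exp ((α*(z - z₀) - γ*|z - z₀|)/2) -
          Real.exp (-α*z₀) * Real.exp ((α*(z + z₀) - γ*(z + z₀))/2))) ∧
      (z₀ < z →
        (1/γ) * (Real.exp ((α*(z - z₀) - γ*|z - z₀|)/2) -
            Real.exp (-α*z₀) * Real.exp ((α*(z + z₀) - γ*(z + z₀))/2)) =
          (1/γ) * (1 - Real.exp (-γ*z₀)) *
            Real.exp (-(γ - α)*(z - z₀)/2)) := by
  intro z hz
  have hγpos : 0 < γ := by rw [hγ]; exact Real.sqrt_pos.mpr hαη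
  have hγsq : γ * γ = α^2 + 4*η := by rw [hγ]; exact Real.mul_self_sqrt hαη.le
  have hbpos : 0 < (α^2 + 4*η)/4 := by linarith
  have hsb : Real.sqrt ((α^2 + 4*η)/4) = γ/2 := by
    rw [show (α^2 + 4*η)/4 = (γ/2)^2 by nlinarith [hγsq]]
    exact Real.sqrt_sq (by positivity)
  have hs1 : Real.sqrt ((z-z₀)^2/4 * ((α^2+4*η)/4)) = |z - z₀| * γ/4 := by
    rw [show (z-z₀)^2/4 * ((α^2+4*η)/4) = (|z - z₀| * γ/4)^2 by
      linear_combination (-(z-z₀)^2/16)*hγsq + (-(γ^2/16))*(sq_abs (z-z₀))]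
    exact Real.sqrt_sq (by positivity)
  have hs2 : Real.sqrt ((z+z₀)^2/4 * ((α^2+4*η)/4)) = (z+z₀)*γ/4 := by
    rw [show (z+z₀)^2/4 * ((α^2+4*η)/4) = ((z+z₀)*γ/4)^2 by
      linear_combination (-(z+z₀)^2/16)*hγsq]
    exact Real.sqrt_sq (by positivity)
  constructor
  · -- the integral computation
    obtain ⟨i1, v1⟩ := key_laplace ((z-z₀)^2/4) ((α^2+4*η)/4) (by positivity) hbpos
    obtain ⟨i2, v2⟩ := key_laplace ((z+z₀)^2/4) ((α^2+4*η)/4) (by positivity) hbpos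
    have eqon : Set.EqOn (fun τ => Real.exp (-η*τ) * φ z τ)
        (fun τ => Real.exp (α*(z-z₀)/2)/(2*Real.sqrt π) *
            (Real.exp (-((z-z₀)^2/4/τ) - (α^2+4*η)/4*τ)/Real.sqrt τ)
          - Real.exp (-α*z₀) * Real.exp (α*(z+z₀)/2)/(2*Real.sqrt π) *
            (Real.exp (-((z+z₀)^2/4/τ) - (α^2+4*η)/4*τ)/Real.sqrt τ)) (Set.Ioi 0) := by
      intro τ hτ
      have hτ0 : (0:ℝ) < τ := hτ
      have hsτ : 0 < Real.sqrt τ := Real.sqrt_pos.mpr hτ0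
      have hsπ : 0 < Real.sqrt π := Real.sqrt_pos.mpr pi_pos
      have hpre : (4*Real.pi*τ)^(-(1:ℝ)/2) = (2*(Real.sqrt π * Real.sqrt τ))⁻¹ := by
        rw [neg_div, Real.rpow_neg (by positivity)]
        congr 1
        rw [← Real.sqrt_eq_rpow,
          show (4:ℝ)*π*τ = (2:ℝ)^2*(π*τ) by ring,
          Real.sqrt_mul (by positivity), Real.sqrt_sq (by norm_num),
          Real.sqrt_mul pi_pos.le]
      have e1 : Real.exp (-η*τ) * Real.exp (-(z - z₀ - α*τ)^2/(4*τ))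
          = Real.exp (α*(z-z₀)/2) * Real.exp (-((z-z₀)^2/4/τ) - (α^2+4*η)/4*τ) := by
        rw [← Real.exp_add, ← Real.exp_add]
        congr 1
        field_simp
        ring
      have e2 : Real.exp (-η*τ) * Real.exp (-(z + z₀ - α*τ)^2/(4*τ))
          = Real.exp (α*(z+z₀)/2) * Real.exp (-((z+z₀)^2/4/τ) - (α^2+4*η)/4*τ) := by
        rw [← Real.exp_add, ← Real.exp_add]
        congr 1
        field_simp
        ring
      simp only
      rw [hφ z τ, hpre,
        show Real.exp (-η*τ) * ((2*(Real.sqrt π * Real.sqrt τ))⁻¹ *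
            (Real.exp (-(z - z₀ - α*τ)^2/(4*τ)) -
              Real.exp (-α*z₀) * Real.exp (-(z + z₀ - α*τ)^2/(4*τ))))
          = (2*(Real.sqrt π * Real.sqrt τ))⁻¹ *
            ((Real.exp (-η*τ) * Real.exp (-(z - z₀ - α*τ)^2/(4*τ))) -
              Real.exp (-α*z₀) * (Real.exp (-η*τ) * Real.exp (-(z + z₀ - α*τ)^2/(4*τ))))
          from by ring, e1, e2]
      field_simp
    rw [MeasureTheory.setIntegral_congr_fun measurableSet_Ioi eqon,
      MeasureTheory.integral_sub (i1.const_mul _) (i2.const_mul _),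
      MeasureTheory.integral_const_mul, MeasureTheory.integral_const_mul, v1, v2,
      hsb, hs1, hs2]
    have r1 : Real.exp ((α*(z - z₀) - γ*|z - z₀|)/2)
        = Real.exp (α*(z-z₀)/2) * Real.exp (-2*(|z - z₀| * γ/4)) := by
      rw [← Real.exp_add]; congr 1; ring
    have r2 : Real.exp ((α*(z + z₀) - γ*(z + z₀))/2)
        = Real.exp (α*(z+z₀)/2) * Real.exp (-2*((z+z₀)*γ/4)) := by
      rw [← Real.exp_add]; congr 1; ring
    rw [r1, r2]
    have hsπ : 0 < Real.sqrt π := Real.sqrt_pos.mpr pi_pos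
    field_simp
  · intro hzz
    rw [abs_of_pos (by linarith : (0:ℝ) < z - z₀)]
    have l1 : Real.exp ((α*(z - z₀) - γ*(z - z₀))/2)
        = Real.exp (-(γ-α)*(z-z₀)/2) := by congr 1; ring
    have l2 : Real.exp (-α*z₀) * Real.exp ((α*(z+z₀) - γ*(z+z₀))/2)
        = Real.exp (-γ*z₀) * Real.exp (-(γ-α)*(z-z₀)/2) := by
      rw [← Real.exp_add, ← Real.exp_add]; congr 1; ring
    rw [l1, l2]; ring
end

section
/- Let μ, h, d, c₀ ∈ ℝ and ν₀ > 0, s₀ > 0, and define the mean total size of the economy Ω(t) := ∫₀ᵗ ν₀·s₀·exp((μ − h)(t − u))·exp((d + c₀)u) du for t > 0. Then (log Ω(t))/t tends to max{μ − h, d + c₀} as t → +∞; that is, the long-term average growth rate of the overall economy equals the maximum of the average growth rate μ − h of incumbent firms and the growth rate d + c₀ of investments in new entrant firms. -/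
open Real Filter

theorem economy_long_term_growth_rate (μ h d c₀ ν₀ s₀ : ℝ)
    (hν₀ : 0 < ν₀) (hs₀ : 0 < s₀)
    (Ω : ℝ → ℝ)
    (hΩ : ∀ t, Ω t = ∫ u in (0:ℝ)..t,
      ν₀ * s₀ * Real.exp ((μ - h)*(t - u)) * Real.exp ((d + c₀)*u)) :
    Filter.Tendsto (fun t => Real.log (Ω t) / t) Filter.atTop
      (nhds (max (μ - h) (d + c₀))) := by
  set a := μ - h with ha
  set b := d + c₀ with hb
  set M := max a b with hM
  set C := |a - b| with hC
  set K := ν₀ * s₀ with hK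
  have hK0 : 0 < K := mul_pos hν₀ hs₀
  have hcont : ∀ t : ℝ, Continuous (fun u => K * Real.exp (a*(t - u)) * Real.exp (b*u)) := by
    intro t; continuity
  -- upper bound
  have hub : ∀ t : ℝ, 1 ≤ t → Ω t ≤ K * t * Real.exp (M * t) := by
    intro t ht
    have ht0 : (0:ℝ) ≤ t := le_trans zero_le_one ht
    rw [hΩ t]
    calc (∫ u in (0:ℝ)..t, K * Real.exp (a*(t - u)) * Real.exp (b*u))
        ≤ ∫ u in (0:ℝ)..t, K * Real.exp (M * t) := by
          apply intervalIntegral.integral_mono_on ht0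
            ((hcont t).intervalIntegrable 0 t)
            (intervalIntegrable_const)
          intro u hu
          rw [mul_assoc, ← Real.exp_add]
          apply mul_le_mul_of_nonneg_left _ hK0.le
          apply Real.exp_le_exp.mpr
          have h1 : a * (t - u) ≤ M * (t - u) :=
            mul_le_mul_of_nonneg_right (le_max_left a b) (by linarith [hu.2])
          have h2 : b * u ≤ M * u :=
            mul_le_mul_of_nonneg_right (le_max_right a b) hu.1
          nlinarith
      _ = K * t * Real.exp (M * t) := by
          rw [intervalIntegral.integral_const]
          simp [smul_eq_mul]; ring
  -- lower bound
  have hlb : ∀ t : ℝ, 1 ≤ t → K * Real.exp (M * t - C) ≤ Ω t := by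
    intro t ht
    have ht0 : (0:ℝ) ≤ t - 1 := by linarith
    rw [hΩ t]
    rcases le_total a b with hab | hab
    · -- M = b, subinterval [t-1, t]
      have hMb : M = b := max_eq_right hab
      have hCv : C = b - a := by rw [hC, abs_sub_comm]; exact abs_of_nonneg (by linarith)
      have hsplit : (∫ u in (0:ℝ)..t, K * Real.exp (a*(t - u)) * Real.exp (b*u))
          = (∫ u in (0:ℝ)..(t-1), K * Real.exp (a*(t - u)) * Real.exp (b*u))
          + ∫ u in (t-1)..t, K * Real.exp (a*(t - u)) * Real.exp (b*u) :=
        (intervalIntegral.integral_add_adjacent_intervals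
          ((hcont t).intervalIntegrable _ _) ((hcont t).intervalIntegrable _ _)).symm
      rw [hsplit]
      have h1 : (0:ℝ) ≤ ∫ u in (0:ℝ)..(t-1), K * Real.exp (a*(t - u)) * Real.exp (b*u) := by
        apply intervalIntegral.integral_nonneg ht0
        intro u _; positivity
      have h2 : K * Real.exp (M * t - C) ≤
          ∫ u in (t-1)..t, K * Real.exp (a*(t - u)) * Real.exp (b*u) := by
        calc K * Real.exp (M * t - C)
            = ∫ _u in (t-1)..t, K * Real.exp (M * t - C) := by
              rw [intervalIntegral.integral_const, smul_eq_mul]; ring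
          _ ≤ _ := by
              apply intervalIntegral.integral_mono_on (by linarith)
                intervalIntegrable_const ((hcont t).intervalIntegrable _ _)
              intro u hu
              have he : Real.exp (M * t - C) ≤ Real.exp (a*(t-u)) * Real.exp (b*u) := by
                rw [← Real.exp_add]
                apply Real.exp_le_exp.mpr
                rw [hMb, hCv]; nlinarith [hu.1, hu.2]
              calc K * Real.exp (M * t - C) ≤ K * (Real.exp (a*(t-u)) * Real.exp (b*u)) :=
                    mul_le_mul_of_nonneg_left he hK0.le
                _ = K * Real.exp (a*(t-u)) * Real.exp (b*u) := by ring
      linarith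
    · -- M = a, subinterval [0, 1]
      have hMa : M = a := max_eq_left hab
      have hCv : C = a - b := by rw [hC]; exact abs_of_nonneg (by linarith)
      have hsplit : (∫ u in (0:ℝ)..t, K * Real.exp (a*(t - u)) * Real.exp (b*u))
          = (∫ u in (0:ℝ)..(1:ℝ), K * Real.exp (a*(t - u)) * Real.exp (b*u))
          + ∫ u in (1:ℝ)..t, K * Real.exp (a*(t - u)) * Real.exp (b*u) :=
        (intervalIntegral.integral_add_adjacent_intervals
          ((hcont t).intervalIntegrable _ _) ((hcont t).intervalIntegrable _ _)).symm
      rw [hsplit]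
      have h1 : (0:ℝ) ≤ ∫ u in (1:ℝ)..t, K * Real.exp (a*(t - u)) * Real.exp (b*u) := by
        apply intervalIntegral.integral_nonneg ht
        intro u _; positivity
      have h2 : K * Real.exp (M * t - C) ≤
          ∫ u in (0:ℝ)..(1:ℝ), K * Real.exp (a*(t - u)) * Real.exp (b*u) := by
        calc K * Real.exp (M * t - C)
            = ∫ _u in (0:ℝ)..(1:ℝ), K * Real.exp (M * t - C) := by
              rw [intervalIntegral.integral_const, smul_eq_mul]; ring
          _ ≤ _ := by
              apply intervalIntegral.integral_mono_on zero_le_one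
                intervalIntegrable_const ((hcont t).intervalIntegrable _ _)
              intro u hu
              have he : Real.exp (M * t - C) ≤ Real.exp (a*(t-u)) * Real.exp (b*u) := by
                rw [← Real.exp_add]
                apply Real.exp_le_exp.mpr
                rw [hMa, hCv]; nlinarith [hu.1, hu.2]
              calc K * Real.exp (M * t - C) ≤ K * (Real.exp (a*(t-u)) * Real.exp (b*u)) :=
                    mul_le_mul_of_nonneg_left he hK0.le
                _ = K * Real.exp (a*(t-u)) * Real.exp (b*u) := by ring
      linarith
  -- squeeze
  have hΩpos : ∀ t : ℝ, 1 ≤ t → 0 < Ω t := fun t ht =>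
    lt_of_lt_of_le (by positivity) (hlb t ht)
  apply tendsto_of_tendsto_of_tendsto_of_le_of_le'
    (g := fun t => (Real.log K - C) / t + M)
    (h := fun t => (Real.log K + Real.log t) / t + M)
  · have : Tendsto (fun t : ℝ => (Real.log K - C) / t) atTop (nhds 0) :=
      tendsto_const_nhds.div_atTop tendsto_id
    simpa using this.add (tendsto_const_nhds (x := M))
  · have h1 : Tendsto (fun t : ℝ => Real.log K / t) atTop (nhds 0) :=
      tendsto_const_nhds.div_atTop tendsto_id
    have h2 : Tendsto (fun t : ℝ => Real.log t / t) atTop (nhds 0) :=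
      Real.isLittleO_log_id_atTop.tendsto_div_nhds_zero
    have := (h1.add h2).add (tendsto_const_nhds (x := M))
    simpa [add_div] using this
  · filter_upwards [eventually_ge_atTop (1:ℝ)] with t ht
    have ht0 : (0:ℝ) < t := lt_of_lt_of_le one_pos ht
    have hlog : Real.log K + (M * t - C) ≤ Real.log (Ω t) := by
      have := (Real.log_le_log_iff (by positivity) (hΩpos t ht)).mpr (hlb t ht)
      rwa [Real.log_mul hK0.ne' (Real.exp_pos _).ne', Real.log_exp] at this
    rw [show (Real.log K - C) / t + M = (Real.log K + (M * t - C)) / t by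
      field_simp; ring]
    exact (div_le_div_iff_of_pos_right ht0).mpr hlog
  · filter_upwards [eventually_ge_atTop (1:ℝ)] with t ht
    have ht0 : (0:ℝ) < t := lt_of_lt_of_le one_pos ht
    have hlog : Real.log (Ω t) ≤ Real.log K + Real.log t + M * t := by
      have := (Real.log_le_log_iff (hΩpos t ht) (by positivity)).mpr (hub t ht)
      rwa [Real.log_mul (by positivity) (Real.exp_pos _).ne',
        Real.log_mul hK0.ne' ht0.ne', Real.log_exp] at this
    rw [show (Real.log K + Real.log t) / t + M
        = (Real.log K + Real.log t + M * t) / t by field_simp]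
    exact (div_le_div_iff_of_pos_right ht0).mpr hlog
end

section
/- Let μ, h, d, c₀ ∈ ℝ and ν₀, s₀ > 0 with d + h > 0 and μ − h > d + c₀. Define N(t) := (ν₀/(d+h))·(e^{dt} − e^{−ht}), Ω(t) := ∫₀ᵗ ν₀ s₀ e^{(μ−h)(t−u)} e^{(d+c₀)u} du, and the ratio of the average entrant size to the average incumbent size R(t) := s₀·e^{c₀t}·N(t)/Ω(t). Then e^{(μ−h−d−c₀)t}·R(t) tends to (μ − h − d − c₀)/(d + h) as t → +∞; that is, R(t) decays like ((μ−h−d−c₀)/(d+h))·e^{−(μ−h−d−c₀)t}. -/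
open Real Filter intervalIntegral

lemma integral_exp_mul_real {c : ℝ} (hc : c ≠ 0) (a b : ℝ) :
    (∫ x in a..b, Real.exp (c * x)) = (Real.exp (c * b) - Real.exp (c * a)) / c := by
  have D : ∀ x : ℝ, HasDerivAt (fun y : ℝ => Real.exp (c * y) / c) (Real.exp (c * x)) x := by
    intro x
    rw [← mul_div_cancel_right₀ (Real.exp (c * x)) hc]
    simpa using ((Real.hasDerivAt_exp _).comp x ((hasDerivAt_id x).const_mul c)).div_const c
  rw [intervalIntegral.integral_eq_sub_of_hasDerivAt (fun x _ => D x)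
    ((Real.continuous_exp.comp (continuous_const.mul continuous_id)).intervalIntegrable a b)]
  ring

theorem entrant_to_incumbent_ratio_sustainable_regime (μ h d c₀ ν₀ s₀ : ℝ)
    (hν₀ : 0 < ν₀) (hs₀ : 0 < s₀) (hdh : 0 < d + h)
    (hreg : d + c₀ < μ - h)
    (N Ω R : ℝ → ℝ)
    (hN : ∀ t, N t = (ν₀/(d+h)) * (Real.exp (d*t) - Real.exp (-h*t)))
    (hΩ : ∀ t, Ω t = ∫ u in (0:ℝ)..t,
      ν₀ * s₀ * Real.exp ((μ - h)*(t - u)) * Real.exp ((d + c₀)*u))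
    (hR : ∀ t, R t = s₀ * Real.exp (c₀*t) * N t / Ω t) :
    Filter.Tendsto (fun t => Real.exp ((μ - h - d - c₀)*t) * R t)
      Filter.atTop (nhds ((μ - h - d - c₀)/(d + h))) := by
  obtain ⟨a, ha_def⟩ : ∃ a : ℝ, a = μ - h - d - c₀ := ⟨_, rfl⟩
  rw [show μ - h - d - c₀ = a from ha_def.symm]
  have ha : 0 < a := by rw [ha_def]; linarith
  have hΩ' : ∀ t, Ω t = ν₀ * s₀ * Real.exp ((μ-h)*t) * ((1 - Real.exp (-a*t))/a) := by
    intro t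
    rw [hΩ]
    have : ∀ u : ℝ, ν₀ * s₀ * Real.exp ((μ - h)*(t - u)) * Real.exp ((d + c₀)*u)
        = (ν₀ * s₀ * Real.exp ((μ-h)*t)) * Real.exp ((-a)*u) := by
      intro u
      simp only [mul_assoc, ← Real.exp_add, ha_def]
      ring_nf
    rw [intervalIntegral.integral_congr (fun u _ => this u),
      intervalIntegral.integral_const_mul,
      integral_exp_mul_real (by simpa using ha.ne' : (-a:ℝ) ≠ 0)]
    rw [mul_zero, Real.exp_zero]
    ring
  have key : ∀ b : ℝ, 0 < b → Tendsto (fun t => Real.exp (-b*t)) atTop (nhds 0) := by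
    intro b hb
    have h1 : Tendsto (fun x : ℝ => b * x) atTop atTop :=
      Filter.Tendsto.const_mul_atTop hb tendsto_id
    have := Real.tendsto_exp_neg_atTop_nhds_zero.comp h1
    simpa [Function.comp_def, neg_mul] using this
  have lim : Tendsto (fun t => (a/(d+h)) * ((1 - Real.exp (-(d+h)*t))/(1 - Real.exp (-a*t))))
      atTop (nhds ((a/(d+h)) * ((1-0)/(1-0)))) :=
    tendsto_const_nhds.mul ((tendsto_const_nhds.sub (key _ hdh)).div
      (tendsto_const_nhds.sub (key _ ha)) (by norm_num))
  rw [show (a/(d+h)) * ((1-(0:ℝ))/(1-0)) = a/(d+h) by norm_num] at lim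
  refine Filter.Tendsto.congr' ?_ lim
  filter_upwards [eventually_gt_atTop 0] with t ht
  have hexp : Real.exp (-a*t) < 1 := by
    rw [Real.exp_lt_one_iff]
    nlinarith
  have hden : (1 : ℝ) - Real.exp (-a*t) ≠ 0 := by linarith
  have hden' : (1 : ℝ) - Real.exp (-(a*t)) ≠ 0 := by rw [← neg_mul]; exact hden
  rw [hR, hN, hΩ']
  have f1 : Real.exp (d*t) - Real.exp (-h*t)
      = Real.exp (d*t) * (1 - Real.exp (-(d+h)*t)) := by
    rw [mul_sub, mul_one, ← Real.exp_add]
    ring_nf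
  have e1 : Real.exp (a*t) * Real.exp (c₀*t) * Real.exp (d*t) = Real.exp ((μ-h)*t) := by
    rw [← Real.exp_add, ← Real.exp_add, ha_def]; ring_nf
  rw [f1]
  field_simp
  rw [mul_comm t (μ - h), mul_comm t c₀]
  linear_combination (1 - Real.exp (-((d + h) * t))) * e1.symm
end

section
/- Let μ, h, d, c₀ ∈ ℝ and ν₀, s₀ > 0 with d + h > 0 and μ − h < d + c₀. Define N(t) := (ν₀/(d+h))·(e^{dt} − e^{−ht}), Ω(t) := ∫₀ᵗ ν₀ s₀ e^{(μ−h)(t−u)} e^{(d+c₀)u} du, and R(t) := s₀·e^{c₀t}·N(t)/Ω(t). Then R(t) tends to (d + c₀ + h − μ)/(d + h) as t → +∞; that is, the size of entrant firms relative to incumbent firms converges to a nonzero constant. -/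
open Real Filter

lemma aux_ratio_alg (dh a ν s E1 E2 E3 E4 E5 E6 E7 : ℝ)
    (hdh : dh ≠ 0) (ha : a ≠ 0) (hν : ν ≠ 0) (hs : s ≠ 0)
    (hE4 : E4 ≠ 0) (hE5 : E5 ≠ 0) (hden : 1 - E6 ≠ 0)
    (r1 : E2 * E7 = E3) (r2 : E5 * E6 = 1) (r3 : E1 * E2 = E4 * E5) :
    s * E1 * (ν/dh * (E2 - E3)) / (ν * s * E4 * ((E5 - 1)/a))
      = a/dh * ((1 - E7)/(1 - E6)) := by
  have hE51 : E5 - 1 = E5 * (1 - E6) := by rw [mul_sub, mul_one, r2]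
  have hnum : E2 - E3 = E2 * (1 - E7) := by rw [mul_sub, mul_one, r1]
  rw [hE51, hnum]
  field_simp
  linear_combination (1 - E7) * r3

theorem entrant_to_incumbent_ratio_investment_driven_regime (μ h d c₀ ν₀ s₀ : ℝ)
    (hν₀ : 0 < ν₀) (hs₀ : 0 < s₀) (hdh : 0 < d + h)
    (hreg : μ - h < d + c₀)
    (N Ω R : ℝ → ℝ)
    (hN : ∀ t, N t = (ν₀/(d+h)) * (Real.exp (d*t) - Real.exp (-h*t)))
    (hΩ : ∀ t, Ω t = ∫ u in (0:ℝ)..t,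
      ν₀ * s₀ * Real.exp ((μ - h)*(t - u)) * Real.exp ((d + c₀)*u))
    (hR : ∀ t, R t = s₀ * Real.exp (c₀*t) * N t / Ω t) :
    Filter.Tendsto R Filter.atTop (nhds ((d + c₀ + h - μ)/(d + h))) := by
  set a := d + c₀ + h - μ with ha_def
  have ha : 0 < a := by simp only [ha_def]; linarith
  -- closed form for Ω
  have hΩ' : ∀ t, Ω t = ν₀ * s₀ * Real.exp ((μ-h)*t) * ((Real.exp (a*t) - 1)/a) := by
    intro t
    rw [hΩ]
    have hpt : ∀ u : ℝ, ν₀ * s₀ * Real.exp ((μ - h)*(t - u)) * Real.exp ((d + c₀)*u)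
        = (ν₀ * s₀ * Real.exp ((μ-h)*t)) * Real.exp (a*u) := by
      intro u
      have he : (μ - h)*(t - u) + (d + c₀)*u = (μ-h)*t + a*u := by
        simp only [ha_def]; ring
      rw [mul_assoc, ← Real.exp_add, he, Real.exp_add]; ring
    simp_rw [hpt]
    rw [intervalIntegral.integral_const_mul]
    have hD : ∀ x : ℝ, HasDerivAt (fun y : ℝ => Real.exp (a*y) / a) (Real.exp (a*x)) x := by
      intro x
      have := ((Real.hasDerivAt_exp (a*x)).comp x ((hasDerivAt_id x).const_mul a)).div_const a
      simpa [mul_comm, mul_div_assoc, mul_div_cancel_left₀ _ ha.ne'] using this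
    have hint : ∫ u in (0:ℝ)..t, Real.exp (a*u)
        = Real.exp (a*t)/a - Real.exp (a*0)/a := by
      refine intervalIntegral.integral_eq_sub_of_hasDerivAt (fun x _ => hD x) ?_
      exact (Real.continuous_exp.comp (continuous_const.mul continuous_id)).intervalIntegrable 0 t
    rw [hint]
    rw [mul_zero, Real.exp_zero]
    ring
  -- the comparison function
  have key : ∀ t : ℝ, 0 < t →
      R t = (a/(d+h)) * ((1 - Real.exp (-(d+h)*t)) / (1 - Real.exp (-a*t))) := by
    intro t ht
    have h1 : Real.exp (-a*t) < 1 := by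
      rw [Real.exp_lt_one_iff]
      nlinarith
    have hden : (1 : ℝ) - Real.exp (-a*t) ≠ 0 := by linarith
    rw [hR, hN, hΩ']
    refine aux_ratio_alg (d+h) a ν₀ s₀ _ _ _ _ _ _ _
      hdh.ne' ha.ne' hν₀.ne' hs₀.ne' (Real.exp_pos _).ne' (Real.exp_pos _).ne' hden
      ?_ ?_ ?_
    · rw [← Real.exp_add]; congr 1; ring
    · rw [← Real.exp_add, ← Real.exp_zero]; congr 1; ring
    · rw [← Real.exp_add, ← Real.exp_add]; congr 1; simp only [ha_def]; ring
  -- limit of the comparison function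
  have hlim : Tendsto (fun t : ℝ => (a/(d+h)) * ((1 - Real.exp (-(d+h)*t)) / (1 - Real.exp (-a*t))))
      atTop (nhds ((d + c₀ + h - μ)/(d + h))) := by
    have l1 : Tendsto (fun t : ℝ => Real.exp (-(d+h)*t)) atTop (nhds 0) := by
      apply Real.tendsto_exp_atBot.comp
      exact (tendsto_const_mul_atBot_of_neg (show -(d+h) < 0 by linarith)).mpr tendsto_id
    have l2 : Tendsto (fun t : ℝ => Real.exp (-a*t)) atTop (nhds 0) := by
      apply Real.tendsto_exp_atBot.comp
      exact (tendsto_const_mul_atBot_of_neg (show -a < 0 by linarith)).mpr tendsto_id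
    have : Tendsto (fun t : ℝ => (a/(d+h)) * ((1 - Real.exp (-(d+h)*t)) / (1 - Real.exp (-a*t))))
        atTop (nhds ((a/(d+h)) * ((1 - 0)/(1 - 0)))) := by
      exact tendsto_const_nhds.mul (((tendsto_const_nhds.sub l1)).div
        (tendsto_const_nhds.sub l2) (by norm_num))
    simpa [ha_def] using this
  refine hlim.congr' ?_
  filter_upwards [eventually_gt_atTop (0:ℝ)] with t ht
  exact (key t ht).symm
end
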